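/- arXiv:1901.03625 — 2 statements merged into one kernel-verified Lean document; each statement's English description precedes it below -/
import Mathlib

section
/- Assume in addition that for each t ≥ 1 there exists z^t ∈ 𝒳^t such that θ ↦ μ^t_θ(z^t) is not w-almost-everywhere equal to a constant. Then in the correlation model the parameters θ⁽¹⁾ and θ⁽²⁾ are independent (their joint law is the product of their marginals) if and only if t = 0; in particular f⁰ ≡ 1 and p⁰(θ, θ') = w(θ) w(θ'). -/
open MeasureTheory Real Filter

noncomputable section

/-- Base-2 Shannon entropy of a finitely supported mass function. -/
def H2 {S : Type*} [Fintype S] (p : S → ℝ) : ℝ :=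
  ∑ s, -(p s * Real.logb 2 (p s))

/-- The correlation model of the paper: a finite alphabet `𝒳`, a measurable parameter set
`Θ ⊆ ℝ^d`, a parametric family of pmfs `μ t θ` on strings of length `t`, and a prior
probability density `w` on `Θ`. -/
structure CorrModel (d : ℕ) (𝒳 : Type) [Fintype 𝒳] where
  Θ : Set (EuclideanSpace ℝ (Fin d))
  hΘ : MeasurableSet Θ
  μ : (t : ℕ) → EuclideanSpace ℝ (Fin d) → (Fin t → 𝒳) → ℝ
  w : EuclideanSpace ℝ (Fin d) → ℝ
  hμpos : ∀ t θ z, 0 < μ t θ z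
  hμsum : ∀ t θ, ∑ z : Fin t → 𝒳, μ t θ z = 1
  hμmeas : ∀ t (z : Fin t → 𝒳), Measurable fun θ => μ t θ z
  hw0 : ∀ θ, 0 ≤ w θ
  hwmeas : Measurable w
  hwint : IntegrableOn w Θ
  hw1 : ∫ θ in Θ, w θ = 1

namespace CorrModel

variable {d : ℕ} {𝒳 : Type} [Fintype 𝒳] (M : CorrModel d 𝒳)

/-- The posterior density of the parameter given the observation `z^t`:
`p(θ | z^t) = μ^t_θ(z^t) w(θ) / ∫ μ^t_φ(z^t) w(φ) dφ`. -/
def post (t : ℕ) (z : Fin t → 𝒳) (θ : EuclideanSpace ℝ (Fin d)) : ℝ :=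
  M.μ t θ z * M.w θ / ∫ φ in M.Θ, M.μ t φ z * M.w φ

/-- `f^t(θ, θ') = Σ_z μ^t_θ(z) μ^t_{θ'}(z) / ∫ μ^t_φ(z) w(φ) dφ`. -/
def f (t : ℕ) (θ θ' : EuclideanSpace ℝ (Fin d)) : ℝ :=
  ∑ z : Fin t → 𝒳, M.μ t θ z * M.μ t θ' z / ∫ φ in M.Θ, M.μ t φ z * M.w φ

end CorrModel


namespace CorrModel

variable {d : ℕ} {𝒳 : Type} [Fintype 𝒳] (M : CorrModel d 𝒳)

/-- The prior probability measure on the parameter set, with density `w` w.r.t. Lebesgue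
measure restricted to `Θ`. -/
def wMeasure : Measure (EuclideanSpace ℝ (Fin d)) :=
  (volume.restrict M.Θ).withDensity fun θ => ENNReal.ofReal (M.w θ)

/-- The joint law of `(θ⁽¹⁾, θ⁽²⁾)` in the correlation model with hyperparameter `t`,
with density `p^t(θ, θ') = w(θ) w(θ') f^t(θ, θ')` w.r.t. Lebesgue measure on `Θ × Θ`. -/
def jointMeasure (t : ℕ) : Measure (EuclideanSpace ℝ (Fin d) × EuclideanSpace ℝ (Fin d)) :=
  ((volume.restrict M.Θ).prod (volume.restrict M.Θ)).withDensity
    fun p => ENNReal.ofReal (M.w p.1 * M.w p.2 * M.f t p.1 p.2)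

end CorrModel

namespace CorrModel

variable {d : ℕ} {𝒳 : Type} [Fintype 𝒳] (M : CorrModel d 𝒳)

def mz (t : ℕ) (z : Fin t → 𝒳) : ℝ := ∫ φ in M.Θ, M.μ t φ z * M.w φ

lemma μ_le_one (t : ℕ) (θ : EuclideanSpace ℝ (Fin d)) (z : Fin t → 𝒳) : M.μ t θ z ≤ 1 := by
  rw [← M.hμsum t θ]
  exact Finset.single_le_sum (f := fun z => M.μ t θ z)
    (fun i _ => (M.hμpos t θ i).le) (Finset.mem_univ z)

lemma int_mulw (b : EuclideanSpace ℝ (Fin d) → ℝ) (hb : Measurable b) (C : ℝ)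
    (hC : ∀ x, |b x| ≤ C) : IntegrableOn (fun θ => b θ * M.w θ) M.Θ :=
  Integrable.bdd_mul (c := C) M.hwint hb.aestronglyMeasurable (ae_of_all _ fun x => by simpa using hC x)

lemma int_μw (t : ℕ) (z : Fin t → 𝒳) :
    IntegrableOn (fun φ => M.μ t φ z * M.w φ) M.Θ :=
  M.int_mulw _ (M.hμmeas t z) 1 (fun x => abs_le.2 ⟨by linarith [(M.hμpos t x z).le], M.μ_le_one t x z⟩)

lemma m_pos (t : ℕ) (z : Fin t → 𝒳) : 0 < M.mz t z := by
  have hsupp : Function.support (fun φ => M.μ t φ z * M.w φ) = Function.support M.w := by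
    ext x
    simp only [Function.mem_support, mul_ne_zero_iff]
    exact ⟨fun h => h.2, fun h => ⟨(M.hμpos t x z).ne', h⟩⟩
  have h1 : 0 < ∫ θ in M.Θ, M.w θ := by rw [M.hw1]; norm_num
  have h2 := (setIntegral_pos_iff_support_of_nonneg_ae
    (ae_of_all _ (fun x => M.hw0 x) : 0 ≤ᵐ[volume.restrict M.Θ] M.w) M.hwint).1 h1
  refine (setIntegral_pos_iff_support_of_nonneg_ae ?_ (M.int_μw t z)).2 ?_
  · exact ae_of_all _ (fun x => mul_nonneg (M.hμpos t x z).le (M.hw0 x))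
  · rwa [hsupp]

lemma m_le_one (t : ℕ) (z : Fin t → 𝒳) : M.mz t z ≤ 1 := by
  rw [mz, ← M.hw1]
  refine setIntegral_mono_on (M.int_μw t z) M.hwint M.hΘ (fun x _ => ?_)
  nlinarith [M.μ_le_one t x z, M.hw0 x, (M.hμpos t x z).le]

lemma f_nonneg (t : ℕ) (θ θ' : EuclideanSpace ℝ (Fin d)) : 0 ≤ M.f t θ θ' :=
  Finset.sum_nonneg fun z _ => div_nonneg
    (mul_nonneg (M.hμpos t θ z).le (M.hμpos t θ' z).le) (M.m_pos t z).le

lemma f_le (t : ℕ) (θ θ' : EuclideanSpace ℝ (Fin d)) :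
    M.f t θ θ' ≤ ∑ z : Fin t → 𝒳, (M.mz t z)⁻¹ := by
  refine Finset.sum_le_sum fun z _ => ?_
  rw [div_eq_mul_inv, show (∫ φ in M.Θ, M.μ t φ z * M.w φ) = M.mz t z from rfl]
  have h := M.m_pos t z
  have h1 : M.μ t θ z * M.μ t θ' z ≤ 1 :=
    mul_le_one₀ (M.μ_le_one t θ z) (M.hμpos t θ' z).le (M.μ_le_one t θ' z)
  calc M.μ t θ z * M.μ t θ' z * (M.mz t z)⁻¹ ≤ 1 * (M.mz t z)⁻¹ :=
        mul_le_mul_of_nonneg_right h1 (inv_nonneg.2 h.le)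
    _ = (M.mz t z)⁻¹ := one_mul _

lemma f_symm (t : ℕ) (θ θ' : EuclideanSpace ℝ (Fin d)) : M.f t θ θ' = M.f t θ' θ := by
  unfold f; congr 1; ext z; rw [mul_comm (M.μ t θ z)]

lemma f_meas_pair (t : ℕ) :
    Measurable (fun p : EuclideanSpace ℝ (Fin d) × EuclideanSpace ℝ (Fin d) => M.f t p.1 p.2) := by
  unfold f
  exact Finset.measurable_sum _ fun z _ =>
    (((M.hμmeas t z).comp measurable_fst).mul ((M.hμmeas t z).comp measurable_snd)).div_const _

lemma f_meas_right (t : ℕ) (θ : EuclideanSpace ℝ (Fin d)) :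
    Measurable (fun θ' => M.f t θ θ') :=
  (M.f_meas_pair t).comp (measurable_const.prodMk measurable_id)

lemma marg (t : ℕ) (θ : EuclideanSpace ℝ (Fin d)) :
    ∫ θ' in M.Θ, M.f t θ θ' * M.w θ' = 1 := by
  have key : (fun θ' => M.f t θ θ' * M.w θ') =
      fun θ' => ∑ z : Fin t → 𝒳, (M.μ t θ z / M.mz t z) * (M.μ t θ' z * M.w θ') := by
    funext θ'
    rw [f, Finset.sum_mul]
    congr 1; ext z; rw [mz]; ring
  rw [key, integral_finset_sum _ (fun z _ => (M.int_μw t z).const_mul _)]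
  have : ∀ z : Fin t → 𝒳,
      ∫ θ' in M.Θ, (M.μ t θ z / M.mz t z) * (M.μ t θ' z * M.w θ') = M.μ t θ z := by
    intro z
    rw [integral_const_mul]
    rw [show ∫ θ' in M.Θ, M.μ t θ' z * M.w θ' = M.mz t z from rfl]
    field_simp [(M.m_pos t z).ne']
  simp_rw [this]
  exact M.hμsum t θ

end CorrModel

namespace CorrModel

variable {d : ℕ} {𝒳 : Type} [Fintype 𝒳] (M : CorrModel d 𝒳)

lemma f_zero (θ θ' : EuclideanSpace ℝ (Fin d)) : M.f 0 θ θ' = 1 := by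
  have hone : ∀ φ z, M.μ 0 φ z = 1 := by
    intro φ z
    have := M.hμsum 0 φ
    rw [Fintype.sum_unique (fun z : Fin 0 → 𝒳 => M.μ 0 φ z)] at this
    rw [Unique.eq_default z]
    exact this
  rw [f, Fintype.sum_unique]
  have : (fun φ => M.μ 0 φ default * M.w φ) = M.w := by
    funext φ; rw [hone, one_mul]
  rw [hone, hone, this, M.hw1]
  norm_num

lemma wMeasure_univ : M.wMeasure Set.univ = 1 := by
  rw [wMeasure, withDensity_apply _ MeasurableSet.univ, Measure.restrict_univ,
    ← ofReal_integral_eq_lintegral_ofReal M.hwint (ae_of_all _ M.hw0), M.hw1,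
    ENNReal.ofReal_one]

lemma probW : IsProbabilityMeasure M.wMeasure := ⟨M.wMeasure_univ⟩

lemma wMeasure_apply {s : Set (EuclideanSpace ℝ (Fin d))} (hs : MeasurableSet s) :
    M.wMeasure s = ∫⁻ θ in s, ENNReal.ofReal (M.w θ) ∂(volume.restrict M.Θ) :=
  withDensity_apply _ hs

lemma wprod : M.wMeasure.prod M.wMeasure
    = ((volume.restrict M.Θ).prod (volume.restrict M.Θ)).withDensity
        (fun p => ENNReal.ofReal (M.w p.1) * ENNReal.ofReal (M.w p.2)) := by
  haveI := M.probW
  refine Measure.prod_eq fun s s' hs hs' => ?_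
  rw [withDensity_apply _ (hs.prod hs'), ← Measure.prod_restrict,
    lintegral_prod_mul (f := fun θ => ENNReal.ofReal (M.w θ))
      (g := fun θ => ENNReal.ofReal (M.w θ))
      M.hwmeas.ennreal_ofReal.aemeasurable M.hwmeas.ennreal_ofReal.aemeasurable,
    M.wMeasure_apply hs, M.wMeasure_apply hs']

lemma density_meas (t : ℕ) :
    Measurable (fun p : EuclideanSpace ℝ (Fin d) × EuclideanSpace ℝ (Fin d) =>
      ENNReal.ofReal (M.w p.1 * M.w p.2 * M.f t p.1 p.2)) :=
  ENNReal.measurable_ofReal.comp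
    (((M.hwmeas.comp measurable_fst).mul (M.hwmeas.comp measurable_snd)).mul (M.f_meas_pair t))

lemma int_wf (t : ℕ) (θ : EuclideanSpace ℝ (Fin d)) :
    IntegrableOn (fun θ' => M.f t θ θ' * M.w θ') M.Θ := by
  refine M.int_mulw _ (M.f_meas_right t θ) (∑ z : Fin t → 𝒳, (M.mz t z)⁻¹) (fun x => ?_)
  rw [abs_of_nonneg (M.f_nonneg t θ x)]
  exact M.f_le t θ x

lemma inner_lint (t : ℕ) (θ : EuclideanSpace ℝ (Fin d)) :
    ∫⁻ θ', ENNReal.ofReal (M.w θ * M.w θ' * M.f t θ θ') ∂(volume.restrict M.Θ)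
      = ENNReal.ofReal (M.w θ) := by
  have heq : (fun θ' => ENNReal.ofReal (M.w θ * M.w θ' * M.f t θ θ'))
      = fun θ' => ENNReal.ofReal (M.w θ) * ENNReal.ofReal (M.f t θ θ' * M.w θ') := by
    funext θ'
    rw [← ENNReal.ofReal_mul (M.hw0 θ)]
    ring_nf
  rw [heq, lintegral_const_mul _ (f := fun θ' => ENNReal.ofReal (M.f t θ θ' * M.w θ')) ((M.f_meas_right t θ).mul M.hwmeas).ennreal_ofReal,
    ← ofReal_integral_eq_lintegral_ofReal (M.int_wf t θ)
      (ae_of_all _ fun x => mul_nonneg (M.f_nonneg t θ x) (M.hw0 x)),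
    M.marg t θ, ENNReal.ofReal_one, mul_one]

lemma marg_fst (t : ℕ) : (M.jointMeasure t).map Prod.fst = M.wMeasure := by
  ext s hs
  rw [Measure.map_apply measurable_fst hs, jointMeasure,
    show Prod.fst ⁻¹' s = s ×ˢ (Set.univ : Set (EuclideanSpace ℝ (Fin d))) by
      ext p; simp,
    withDensity_apply _ (hs.prod MeasurableSet.univ),
    ← Measure.restrict_prod_eq_prod_univ,
    lintegral_prod _ (M.density_meas t).aemeasurable]
  simp_rw [M.inner_lint t]
  rw [M.wMeasure_apply hs]

lemma inner_lint' (t : ℕ) (θ' : EuclideanSpace ℝ (Fin d)) :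
    ∫⁻ θ, ENNReal.ofReal (M.w θ * M.w θ' * M.f t θ θ') ∂(volume.restrict M.Θ)
      = ENNReal.ofReal (M.w θ') := by
  have heq : (fun θ => ENNReal.ofReal (M.w θ * M.w θ' * M.f t θ θ'))
      = fun θ => ENNReal.ofReal (M.w θ' * M.w θ * M.f t θ' θ) := by
    funext θ; rw [M.f_symm]; ring_nf
  rw [heq]
  exact M.inner_lint t θ'

lemma marg_snd (t : ℕ) : (M.jointMeasure t).map Prod.snd = M.wMeasure := by
  ext s hs
  rw [Measure.map_apply measurable_snd hs, jointMeasure,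
    show Prod.snd ⁻¹' s = (Set.univ : Set (EuclideanSpace ℝ (Fin d))) ×ˢ s by
      ext p; simp,
    withDensity_apply _ (MeasurableSet.univ.prod hs),
    show ((volume.restrict M.Θ).prod (volume.restrict M.Θ)).restrict
        ((Set.univ : Set (EuclideanSpace ℝ (Fin d))) ×ˢ s)
      = ((volume.restrict M.Θ).prod ((volume.restrict M.Θ).restrict s)) by
        have hre := Measure.prod_restrict (μ := volume.restrict M.Θ)
          (ν := volume.restrict M.Θ) Set.univ s
        rw [Measure.restrict_univ] at hre
        exact hre.symm,
    lintegral_prod_symm _ (M.density_meas t).aemeasurable]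
  simp_rw [M.inner_lint' t]
  rw [M.wMeasure_apply hs]

end CorrModel

namespace CorrModel

variable {d : ℕ} {𝒳 : Type} [Fintype 𝒳] (M : CorrModel d 𝒳)

lemma sum_m (t : ℕ) : ∑ z : Fin t → 𝒳, M.mz t z = 1 := by
  unfold mz
  rw [← integral_finset_sum Finset.univ (fun z _ => M.int_μw t z)]
  have h : (fun φ => ∑ z : Fin t → 𝒳, M.μ t φ z * M.w φ) =ᵐ[volume.restrict M.Θ] M.w :=
    ae_of_all _ fun φ => by
      show (∑ z : Fin t → 𝒳, M.μ t φ z * M.w φ) = M.w φ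
      rw [← Finset.sum_mul, M.hμsum, one_mul]
  rw [integral_congr_ae h, M.hw1]

lemma f_sub_one (t : ℕ) (θ θ' : EuclideanSpace ℝ (Fin d)) :
    M.f t θ θ' - 1 = ∑ z : Fin t → 𝒳,
      (M.μ t θ z - M.mz t z) * (M.μ t θ' z - M.mz t z) / M.mz t z := by
  have per : ∀ z : Fin t → 𝒳,
      (M.μ t θ z - M.mz t z) * (M.μ t θ' z - M.mz t z) / M.mz t z
        = M.μ t θ z * M.μ t θ' z / M.mz t z - M.μ t θ z - M.μ t θ' z + M.mz t z := by
    intro z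
    field_simp [(M.m_pos t z).ne']
    ring
  rw [Finset.sum_congr rfl (fun z _ => per z), Finset.sum_add_distrib,
    Finset.sum_sub_distrib, Finset.sum_sub_distrib, M.hμsum, M.hμsum, M.sum_m]
  have hf : M.f t θ θ' = ∑ z : Fin t → 𝒳, M.μ t θ z * M.μ t θ' z / M.mz t z := rfl
  rw [hf]
  ring

lemma ubound (t : ℕ) (z : Fin t → 𝒳) (θ : EuclideanSpace ℝ (Fin d)) :
    |M.μ t θ z - M.mz t z| ≤ 1 := by
  have h1 := M.μ_le_one t θ z
  have h2 := M.hμpos t θ z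
  have h3 := M.m_pos t z
  have h4 := M.m_le_one t z
  rw [abs_le]
  constructor <;> linarith

lemma meas_u (t : ℕ) (z : Fin t → 𝒳) :
    Measurable (fun θ => M.μ t θ z - M.mz t z) :=
  (M.hμmeas t z).sub measurable_const

lemma int_uu (t : ℕ) (z z' : Fin t → 𝒳) :
    IntegrableOn (fun θ =>
      ((M.μ t θ z - M.mz t z) * (M.μ t θ z' - M.mz t z')) * M.w θ) M.Θ := by
  refine M.int_mulw _ ((M.meas_u t z).mul (M.meas_u t z')) 1 (fun x => ?_)
  rw [abs_mul]
  calc |M.μ t x z - M.mz t z| * |M.μ t x z' - M.mz t z'| ≤ 1 * 1 :=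
      mul_le_mul (M.ubound t z x) (M.ubound t z' x) (abs_nonneg _) zero_le_one
    _ = 1 := one_mul 1

/-- Key contradiction lemma: if the joint law is the product `W × W`, then every
`θ ↦ μ t θ z₀` is `wMeasure`-a.e. constant. -/
lemma indep_imp (t : ℕ) (z₀ : Fin t → 𝒳)
    (heq : M.jointMeasure t = M.wMeasure.prod M.wMeasure) :
    (fun θ => M.μ t θ z₀) =ᵐ[M.wMeasure] fun _ => M.mz t z₀ := by
  classical
  haveI := M.probW
  set R := volume.restrict M.Θ with hR
  -- densities agree a.e.
  have hwd : M.jointMeasure t = (R.prod R).withDensity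
      (fun p => ENNReal.ofReal (M.w p.1) * ENNReal.ofReal (M.w p.2)) := by
    rw [heq, M.wprod]
  have hfin : ∫⁻ p, ENNReal.ofReal (M.w p.1 * M.w p.2 * M.f t p.1 p.2) ∂(R.prod R) ≠ ⊤ := by
    have : ∫⁻ p, ENNReal.ofReal (M.w p.1 * M.w p.2 * M.f t p.1 p.2) ∂(R.prod R)
        = M.jointMeasure t Set.univ := by
      rw [jointMeasure, withDensity_apply _ MeasurableSet.univ, Measure.restrict_univ]
    rw [this, heq, measure_univ]
    exact ENNReal.one_ne_top
  have hmeas2 : Measurable (fun p : EuclideanSpace ℝ (Fin d) × EuclideanSpace ℝ (Fin d) =>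
      ENNReal.ofReal (M.w p.1) * ENNReal.ofReal (M.w p.2)) :=
    ((M.hwmeas.comp measurable_fst).ennreal_ofReal).mul
      ((M.hwmeas.comp measurable_snd).ennreal_ofReal)
  have hD : (fun p : EuclideanSpace ℝ (Fin d) × EuclideanSpace ℝ (Fin d) =>
        ENNReal.ofReal (M.w p.1 * M.w p.2 * M.f t p.1 p.2))
      =ᵐ[R.prod R] fun p => ENNReal.ofReal (M.w p.1) * ENNReal.ofReal (M.w p.2) := by
    refine (withDensity_eq_iff (M.density_meas t).aemeasurable hmeas2.aemeasurable hfin).1 ?_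
    rw [← jointMeasure]
    exact hwd
  have hreal : ∀ᵐ p ∂(R.prod R),
      M.w p.1 * M.w p.2 * M.f t p.1 p.2 = M.w p.1 * M.w p.2 := by
    filter_upwards [hD] with p hp
    rw [← ENNReal.ofReal_mul (M.hw0 p.1)] at hp
    exact (ENNReal.ofReal_eq_ofReal_iff
      (mul_nonneg (mul_nonneg (M.hw0 p.1) (M.hw0 p.2)) (M.f_nonneg t p.1 p.2))
      (mul_nonneg (M.hw0 p.1) (M.hw0 p.2))).1 hp
  have hae : ∀ᵐ θ ∂ R, ∀ᵐ θ' ∂ R,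
      M.w θ * M.w θ' * M.f t θ θ' = M.w θ * M.w θ' :=
    Measure.ae_ae_of_ae_prod hreal
  -- notation
  set u : EuclideanSpace ℝ (Fin d) → ℝ := fun θ => M.μ t θ z₀ - M.mz t z₀ with hu
  set c : (Fin t → 𝒳) → ℝ :=
    fun z => ∫ θ in M.Θ, (u θ * (M.μ t θ z - M.mz t z)) * M.w θ with hc
  -- inner integral identity
  have hinner : ∀ θ, ∫ θ' in M.Θ, (u θ' * (M.f t θ θ' - 1)) * M.w θ'
      = ∑ z : Fin t → 𝒳, ((M.μ t θ z - M.mz t z) / M.mz t z) * c z := by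
    intro θ
    have hfun : (fun θ' => (u θ' * (M.f t θ θ' - 1)) * M.w θ')
        = fun θ' => ∑ z : Fin t → 𝒳, ((M.μ t θ z - M.mz t z) / M.mz t z)
            * ((u θ' * (M.μ t θ' z - M.mz t z)) * M.w θ') := by
      funext θ'
      rw [M.f_sub_one t θ θ', Finset.mul_sum, Finset.sum_mul]
      refine Finset.sum_congr rfl (fun z _ => ?_)
      ring
    rw [hfun, integral_finset_sum _ (fun z _ => ((M.int_uu t z₀ z).const_mul _))]
    refine Finset.sum_congr rfl (fun z _ => ?_)
    rw [integral_const_mul]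
  -- define J and compute it in two ways
  set J : ℝ := ∫ θ in M.Θ,
      (u θ * (∫ θ' in M.Θ, (u θ' * (M.f t θ θ' - 1)) * M.w θ')) * M.w θ with hJ
  have hJval : J = ∑ z : Fin t → 𝒳, (c z) ^ 2 / M.mz t z := by
    have hfun : (fun θ => (u θ * (∫ θ' in M.Θ, (u θ' * (M.f t θ θ' - 1)) * M.w θ')) * M.w θ)
        = fun θ => ∑ z : Fin t → 𝒳, (c z / M.mz t z)
            * ((u θ * (M.μ t θ z - M.mz t z)) * M.w θ) := by
      funext θ
      rw [hinner θ, Finset.mul_sum, Finset.sum_mul]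
      refine Finset.sum_congr rfl (fun z _ => ?_)
      ring
    rw [hJ, hfun, integral_finset_sum _ (fun z _ => ((M.int_uu t z₀ z).const_mul _))]
    refine Finset.sum_congr rfl (fun z _ => ?_)
    have hcz' : (∫ θ in M.Θ, (u θ * (M.μ t θ z - M.mz t z)) * M.w θ) = c z := rfl
    rw [integral_const_mul, hcz']
    ring
  have hJ0 : J = 0 := by
    rw [hJ]
    refine integral_eq_zero_of_ae ?_
    filter_upwards [hae] with θ hθ
    have hin : ∫ θ' in M.Θ, M.w θ * ((u θ' * (M.f t θ θ' - 1)) * M.w θ') = 0 := by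
      refine integral_eq_zero_of_ae ?_
      filter_upwards [hθ] with θ' hP
      show M.w θ * ((u θ' * (M.f t θ θ' - 1)) * M.w θ') = 0
      linear_combination u θ' * hP
    have h2 : M.w θ * (∫ θ' in M.Θ, (u θ' * (M.f t θ θ' - 1)) * M.w θ') = 0 := by
      rw [← integral_const_mul]
      exact hin
    show (u θ * (∫ θ' in M.Θ, (u θ' * (M.f t θ θ' - 1)) * M.w θ')) * M.w θ = 0
    linear_combination u θ * h2
  -- conclude c z₀ = 0
  have hsum0 : ∑ z : Fin t → 𝒳, (c z) ^ 2 / M.mz t z = 0 := by rw [← hJval, hJ0]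
  have hcz : c z₀ = 0 := by
    have hz := (Finset.sum_eq_zero_iff_of_nonneg
      (fun z _ => div_nonneg (sq_nonneg (c z)) (M.m_pos t z).le)).1 hsum0 z₀
      (Finset.mem_univ z₀)
    have := (div_eq_zero_iff.1 hz).resolve_right (M.m_pos t z₀).ne'
    exact (pow_eq_zero_iff (by norm_num : (2:ℕ) ≠ 0)).1 this
  -- u = 0 a.e. w.r.t. R weighted by w
  have hzero : (fun θ => (u θ * (M.μ t θ z₀ - M.mz t z₀)) * M.w θ) =ᵐ[R] 0 := by
    refine (setIntegral_eq_zero_iff_of_nonneg_ae ?_ (M.int_uu t z₀ z₀)).1 hcz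
    exact ae_of_all _ fun θ => mul_nonneg (mul_self_nonneg _) (M.hw0 θ)
  show ∀ᵐ θ ∂M.wMeasure, M.μ t θ z₀ = M.mz t z₀
  rw [wMeasure]
  rw [ae_withDensity_iff M.hwmeas.ennreal_ofReal]
  filter_upwards [hzero] with θ h hne
  have hwθ : M.w θ ≠ 0 := by
    intro h0
    rw [h0, ENNReal.ofReal_zero] at hne
    exact hne rfl
  have h' : (u θ * (M.μ t θ z₀ - M.mz t z₀)) * M.w θ = 0 := h
  have h'' : u θ * (M.μ t θ z₀ - M.mz t z₀) = 0 := by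
    rcases mul_eq_zero.1 h' with h1 | h1
    · exact h1
    · exact absurd h1 hwθ
  have h3 : u θ = 0 := by
    have : u θ * u θ = 0 := h''
    exact mul_self_eq_zero.1 this
  have : M.μ t θ z₀ - M.mz t z₀ = 0 := h3
  linarith

end CorrModel

/-- Lemma 3 of the paper.
Assume in addition that for each `t ≥ 1` there exists `z^t ∈ 𝒳^t` such that
`θ ↦ μ^t_θ(z^t)` is not `w`-almost-everywhere equal to a constant. Then the parameters
`θ⁽¹⁾` and `θ⁽²⁾` are independent (their joint law is the product of their marginals) if
and only if `t = 0`; in particular `f⁰ ≡ 1` and `p⁰(θ, θ') = w(θ) w(θ')`. -/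
theorem stmt_3 {d : ℕ} {𝒳 : Type} [Fintype 𝒳] (hd : 1 ≤ d) (h𝒳 : 2 ≤ Fintype.card 𝒳)
    (M : CorrModel d 𝒳)
    (hnc : ∀ t : ℕ, 1 ≤ t → ∃ z : Fin t → 𝒳,
      ¬ ∃ cst : ℝ, (fun θ => M.μ t θ z) =ᵐ[M.wMeasure] fun _ => cst) :
    (∀ t : ℕ,
      (M.jointMeasure t
          = ((M.jointMeasure t).map Prod.fst).prod ((M.jointMeasure t).map Prod.snd)
        ↔ t = 0)) ∧
    (∀ θ θ', M.f 0 θ θ' = 1) ∧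
    (∀ θ θ', M.w θ * M.w θ' * M.f 0 θ θ' = M.w θ * M.w θ') := by
  refine ⟨fun t => ⟨?_, ?_⟩, fun θ θ' => M.f_zero θ θ',
    fun θ θ' => by rw [M.f_zero, mul_one]⟩
  · intro h
    by_contra hne
    obtain ⟨z₀, hz⟩ := hnc t (Nat.one_le_iff_ne_zero.2 hne)
    rw [M.marg_fst t, M.marg_snd t] at h
    exact hz ⟨M.mz t z₀, M.indep_imp t z₀ h⟩
  · rintro rfl
    rw [M.marg_fst 0, M.marg_snd 0, M.wprod, CorrModel.jointMeasure]
    congr 1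
    funext p
    rw [M.f_zero, mul_one, ENNReal.ofReal_mul (M.hw0 p.1)]
end
end

section
/- Let (X, Y) be a pair of random variables on finite sets A and B. Let c : A × B → {0,1}* be an encoder whose set of realized codewords is prefix-free, and suppose there exists a decoder d : {0,1}* → A (not having access to Y) with d(c(x, y)) = x for every (x, y) with P(X = x, Y = y) > 0. Then E|c(X, Y)| ≥ H(X). Hence side information available only at the encoder provides no reduction in the minimum expected codeword length of strictly lossless compression. -/
open Finset Real

noncomputable section

/-- A set of binary strings is prefix-free if no element is a proper prefix of another. -/
def PrefixFree (C : Set (List Bool)) : Prop :=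
  ∀ u ∈ C, ∀ v ∈ C, u <+: v → u = v

def allLists (n : ℕ) : Finset (List Bool) :=
  (Finset.univ : Finset (Fin n → Bool)).image List.ofFn

lemma mem_allLists {n : ℕ} {u : List Bool} : u ∈ allLists n ↔ u.length = n := by
  constructor
  · rintro h
    simp only [allLists, Finset.mem_image] at h
    obtain ⟨f, -, rfl⟩ := h
    simp
  · rintro rfl
    simp only [allLists, Finset.mem_image]
    exact ⟨u.get, Finset.mem_univ _, List.ofFn_get u⟩

lemma card_allLists (n : ℕ) : (allLists n).card = 2 ^ n := by
  rw [allLists, Finset.card_image_of_injective _ List.ofFn_injective]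
  simp

lemma kraft_nat (W : Finset (List Bool)) (L : ℕ) (hL : ∀ w ∈ W, w.length ≤ L)
    (hpf : ∀ u ∈ W, ∀ v ∈ W, u <+: v → u = v) :
    ∑ w ∈ W, 2 ^ (L - w.length) ≤ 2 ^ L := by
  classical
  set E : List Bool → Finset (List Bool) := fun w => (allLists (L - w.length)).image (fun u => w ++ u)
  have hcard : ∀ w ∈ W, (E w).card = 2 ^ (L - w.length) := by
    intro w hw
    rw [Finset.card_image_of_injective _ (List.append_right_injective w), card_allLists]
  have hdisj : ∀ u ∈ W, ∀ v ∈ W, u ≠ v → Disjoint (E u) (E v) := by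
    intro u hu v hv huv
    rw [Finset.disjoint_left]
    rintro x hx hx'
    simp only [E, Finset.mem_image] at hx hx'
    obtain ⟨a, -, rfl⟩ := hx
    obtain ⟨b, -, hb⟩ := hx'
    have h1 : u <+: u ++ a := List.prefix_append u a
    have h2 : v <+: u ++ a := ⟨b, hb⟩
    rcases List.prefix_or_prefix_of_prefix h1 h2 with h | h
    · exact huv (hpf u hu v hv h)
    · exact huv ((hpf v hv u hu h).symm)
  have hsub : W.biUnion E ⊆ allLists L := by
    intro x hx
    simp only [Finset.mem_biUnion] at hx
    obtain ⟨w, hw, hx⟩ := hx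
    simp only [E, Finset.mem_image] at hx
    obtain ⟨a, ha, rfl⟩ := hx
    rw [mem_allLists] at ha ⊢
    simp [ha, Nat.add_sub_cancel' (hL w hw)]
  calc ∑ w ∈ W, 2 ^ (L - w.length) = (W.biUnion E).card := by
        rw [Finset.card_biUnion hdisj]; exact (Finset.sum_congr rfl hcard).symm
    _ ≤ (allLists L).card := Finset.card_le_card hsub
    _ = 2 ^ L := card_allLists L

lemma kraft (W : Finset (List Bool))
    (hpf : ∀ u ∈ W, ∀ v ∈ W, u <+: v → u = v) :
    ∑ w ∈ W, ((2:ℝ) ^ w.length)⁻¹ ≤ 1 := by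
  classical
  obtain ⟨L, hL⟩ : ∃ L, ∀ w ∈ W, w.length ≤ L :=
    ⟨W.sup List.length, fun w hw => Finset.le_sup hw⟩
  have h := kraft_nat W L hL hpf
  have h2 : (∑ w ∈ W, (2:ℝ) ^ (L - w.length)) ≤ 2 ^ L := by exact_mod_cast h
  have key : ∀ w ∈ W, ((2:ℝ) ^ w.length)⁻¹ = 2 ^ (L - w.length) / 2 ^ L := by
    intro w hw
    rw [pow_sub₀ (2:ℝ) two_ne_zero (hL w hw)]
    field_simp
  rw [Finset.sum_congr rfl key, ← Finset.sum_div, div_le_one (by positivity)]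
  exact h2

/-- the `UcompE` result of the paper: encoder-only side information
does not help strictly lossless compression.
Let `(X, Y)` be a pair of random variables on finite sets `A` and `B` with joint mass
function `p`.  Let `c : A × B → {0,1}*` be an encoder whose set of realized codewords is
prefix-free, and suppose there exists a decoder `d : {0,1}* → A` (not having access to
`Y`) with `d(c(x, y)) = x` for every `(x, y)` with `P(X = x, Y = y) > 0`.  Then
`E|c(X, Y)| ≥ H(X)`. -/
theorem stmt_10 {A B : Type} [Fintype A] [Fintype B]
    (p : A × B → ℝ) (hp0 : ∀ ab, 0 ≤ p ab) (hp1 : ∑ ab, p ab = 1)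
    (c : A × B → List Bool) (hpf : PrefixFree (Set.range c))
    (dec : List Bool → A) (hdec : ∀ ab : A × B, 0 < p ab → dec (c ab) = ab.1) :
    H2 (fun a => ∑ b, p (a, b)) ≤ ∑ ab, p ab * ((c ab).length : ℝ) := by
  classical
  set q : A → ℝ := fun a => ∑ b, p (a, b) with hq
  have hq0 : ∀ a, 0 ≤ q a := fun a => Finset.sum_nonneg fun b _ => hp0 _
  have hB : Nonempty B := by
    by_contra h
    rw [not_nonempty_iff] at h
    simp [Fintype.sum_prod_type] at hp1
  set S : Finset A := Finset.univ.filter (fun a => 0 < q a) with hS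
  have hqS : ∀ a ∉ S, q a = 0 := by
    intro a ha
    simp only [hS, Finset.mem_filter, Finset.mem_univ, true_and, not_lt] at ha
    linarith [hq0 a]
  -- choose minimizing b for each a in support
  have hex : ∀ a ∈ S, ∃ b, 0 < p (a, b) ∧
      ∀ b', 0 < p (a, b') → (c (a, b)).length ≤ (c (a, b')).length := by
    intro a ha
    simp only [hS, Finset.mem_filter, Finset.mem_univ, true_and] at ha
    have : ∃ b, 0 < p (a, b) := by
      by_contra h
      push_neg at h
      have : q a = 0 := Finset.sum_eq_zero fun b _ => le_antisymm (h b) (hp0 _)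
      linarith
    obtain ⟨b0, hb0⟩ := this
    obtain ⟨b, hb, hbmin⟩ := Finset.exists_min_image
      (Finset.univ.filter (fun b => 0 < p (a, b))) (fun b => (c (a, b)).length)
      ⟨b0, by simpa using hb0⟩
    simp only [Finset.mem_filter, Finset.mem_univ, true_and] at hb
    exact ⟨b, hb, fun b' hb' => hbmin b' (by simpa using hb')⟩
  choose! ba hba1 hba2 using hex
  set w : A → List Bool := fun a => c (a, ba a) with hw
  -- injectivity on S
  have hinj : Set.InjOn w S := by
    intro a ha a' ha' heq
    have h1 := hdec (a, ba a) (hba1 a ha)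
    have h2 := hdec (a', ba a') (hba1 a' ha')
    simp only [hw] at heq
    rw [heq] at h1
    exact h1.symm.trans h2
  -- Kraft
  have hkraft : ∑ a ∈ S, ((2:ℝ) ^ (w a).length)⁻¹ ≤ 1 := by
    rw [← Finset.sum_image (f := fun v : List Bool => ((2:ℝ) ^ v.length)⁻¹)
      (fun a ha a' ha' h => hinj ha ha' h)]
    apply kraft
    intro u hu v hv huv
    simp only [Finset.mem_image] at hu hv
    obtain ⟨a, -, rfl⟩ := hu
    obtain ⟨a', -, rfl⟩ := hv
    exact hpf _ ⟨(a, ba a), rfl⟩ _ ⟨(a', ba a'), rfl⟩ huv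
  -- sum of q over S is 1
  have hqsum : ∑ a ∈ S, q a = 1 := by
    have : ∑ a ∈ S, q a = ∑ a, q a := by
      apply Finset.sum_subset (Finset.filter_subset _ _)
      intro a _ ha
      exact hqS a ha
    rw [this, hq, ← Fintype.sum_prod_type, hp1]
  -- step 2: intermediate sum
  have hstep2 : ∑ a ∈ S, q a * ((w a).length : ℝ) ≤ ∑ ab, p ab * ((c ab).length : ℝ) := by
    have h1 : ∑ ab, p ab * ((c ab).length : ℝ)
        = ∑ a, ∑ b, p (a, b) * ((c (a, b)).length : ℝ) := by
      rw [Fintype.sum_prod_type]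
    rw [h1]
    have h2 : ∑ a ∈ S, q a * ((w a).length : ℝ)
        ≤ ∑ a ∈ S, ∑ b, p (a, b) * ((c (a, b)).length : ℝ) := by
      apply Finset.sum_le_sum
      intro a ha
      rw [hq]
      rw [Finset.sum_mul]
      apply Finset.sum_le_sum
      intro b _
      rcases lt_or_eq_of_le (hp0 (a, b)) with hpb | hpb
      · have := hba2 a ha b hpb
        have hlen : ((w a).length : ℝ) ≤ ((c (a, b)).length : ℝ) := by exact_mod_cast this
        exact mul_le_mul_of_nonneg_left hlen (le_of_lt hpb)
      · simp [← hpb]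
    refine h2.trans ?_
    apply Finset.sum_le_sum_of_subset_of_nonneg (Finset.filter_subset _ _)
    intro a _ _
    exact Finset.sum_nonneg fun b _ => mul_nonneg (hp0 _) (by positivity)
  -- step 1: entropy bound
  have hstep1 : H2 q ≤ ∑ a ∈ S, q a * ((w a).length : ℝ) := by
    have hH : H2 q = ∑ a ∈ S, -(q a * Real.logb 2 (q a)) := by
      rw [H2]
      symm
      apply Finset.sum_subset (Finset.filter_subset _ _)
      intro a _ ha
      rw [hqS a ha]; ring
    rw [hH, ← sub_nonpos, ← Finset.sum_sub_distrib]
    have hterm : ∀ a ∈ S, -(q a * Real.logb 2 (q a)) - q a * ((w a).length : ℝ)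
        ≤ (((2:ℝ) ^ (w a).length)⁻¹ - q a) / Real.log 2 := by
      intro a ha
      have hqa : 0 < q a := by
        simp only [hS, Finset.mem_filter, Finset.mem_univ, true_and] at ha; exact ha
      have hlog2 : (0:ℝ) < Real.log 2 := Real.log_pos (by norm_num)
      have hx : (0:ℝ) < ((2:ℝ) ^ (w a).length)⁻¹ / q a := by positivity
      have hlogle : Real.log (((2:ℝ) ^ (w a).length)⁻¹ / q a)
          ≤ ((2:ℝ) ^ (w a).length)⁻¹ / q a - 1 := Real.log_le_sub_one_of_pos hx
      have hsplit : Real.log (((2:ℝ) ^ (w a).length)⁻¹ / q a)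
          = -(((w a).length : ℝ) * Real.log 2) - Real.log (q a) := by
        rw [Real.log_div (by positivity) (ne_of_gt hqa), Real.log_inv, Real.log_pow]
      have hlogb : Real.logb 2 (q a) = Real.log (q a) / Real.log 2 := rfl
      rw [hlogb, le_div_iff₀ hlog2]
      have h3 : -(((w a).length : ℝ) * Real.log 2) - Real.log (q a)
          ≤ ((2:ℝ) ^ (w a).length)⁻¹ / q a - 1 := hsplit ▸ hlogle
      have h4 : q a * (-(((w a).length : ℝ) * Real.log 2) - Real.log (q a))
          ≤ q a * (((2:ℝ) ^ (w a).length)⁻¹ / q a - 1) :=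
        mul_le_mul_of_nonneg_left h3 (le_of_lt hqa)
      have h5 : q a * (((2:ℝ) ^ (w a).length)⁻¹ / q a - 1)
          = ((2:ℝ) ^ (w a).length)⁻¹ - q a := by
        field_simp
      have h6 : (-(q a * (Real.log (q a) / Real.log 2)) - q a * ((w a).length : ℝ)) * Real.log 2
          = q a * (-(((w a).length : ℝ) * Real.log 2) - Real.log (q a)) := by
        field_simp
        ring
      rw [h6]
      linarith [h4, h5]
    calc ∑ a ∈ S, (-(q a * Real.logb 2 (q a)) - q a * ((w a).length : ℝ))
        ≤ ∑ a ∈ S, (((2:ℝ) ^ (w a).length)⁻¹ - q a) / Real.log 2 :=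
          Finset.sum_le_sum hterm
      _ = (∑ a ∈ S, ((2:ℝ) ^ (w a).length)⁻¹ - ∑ a ∈ S, q a) / Real.log 2 := by
          rw [← Finset.sum_div, Finset.sum_sub_distrib]
      _ ≤ 0 := by
          apply div_nonpos_of_nonpos_of_nonneg
          · rw [hqsum]; linarith [hkraft]
          · exact le_of_lt (Real.log_pos (by norm_num))
  calc H2 q ≤ ∑ a ∈ S, q a * ((w a).length : ℝ) := hstep1
    _ ≤ ∑ ab, p ab * ((c ab).length : ℝ) := hstep2
end
end
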